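/- arXiv:2108.11125 — 2 statements merged into one kernel-verified Lean document; each statement's English description precedes it below -/
import Mathlib

section
/- Suppose the sequence (x^k, y^k) is generated by N-PDHG1, i.e., x^{k+1} ∈ X minimizes x ↦ Φ(x, y^k) + (1/2)⟨x − x^k, (rAᵀA + Q)(x − x^k)⟩ over X, and y^{k+1} ∈ Y maximizes y ↦ Φ(2x^{k+1} − x^k, y) − (1/(2r))‖y − y^k‖² over Y. Then for every k, u^{k+1} = (x^{k+1}, y^{k+1}) ∈ M and for all u = (x, y) ∈ M: θ(u) − θ(u^{k+1}) + ⟨u − u^{k+1}, M̂u⟩ ≥ ⟨u − u^{k+1}, H(u^k − u^{k+1})⟩. -/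
open Matrix

noncomputable section

/-- The saddle function `Φ(x, y) = θ₁(x) − ⟨y, Ax⟩ − θ₂(y)`. -/
def Phi {n m : ℕ} (θ1 : (Fin n → ℝ) → ℝ) (θ2 : (Fin m → ℝ) → ℝ)
    (A : Matrix (Fin m) (Fin n) ℝ) (x : Fin n → ℝ) (y : Fin m → ℝ) : ℝ :=
  θ1 x - y ⬝ᵥ (A *ᵥ x) - θ2 y

/-- The bilinear form `(u₁, u₂) ↦ ⟨u₁, H u₂⟩` of `H = [[rAᵀA + Q, Aᵀ], [A, (1/r)I]]`. -/
def Hbil {n m : ℕ} (A : Matrix (Fin m) (Fin n) ℝ) (Q : Matrix (Fin n) (Fin n) ℝ) (r : ℝ)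
    (u₁ u₂ : (Fin n → ℝ) × (Fin m → ℝ)) : ℝ :=
  u₁.1 ⬝ᵥ ((r • (Aᵀ * A) + Q) *ᵥ u₂.1) + u₁.1 ⬝ᵥ (Aᵀ *ᵥ u₂.2) + u₁.2 ⬝ᵥ (A *ᵥ u₂.1)
    + 1 / r * (u₁.2 ⬝ᵥ u₂.2)

/-- The squared `H`-weighted norm `‖u‖²_H = ⟨u, Hu⟩`. -/
def HnormSq {n m : ℕ} (A : Matrix (Fin m) (Fin n) ℝ) (Q : Matrix (Fin n) (Fin n) ℝ) (r : ℝ)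
    (u : (Fin n → ℝ) × (Fin m → ℝ)) : ℝ := Hbil A Q r u u

/-- `⟨u − u', M̂v⟩` where `M̂ = [[0, −Aᵀ], [A, 0]]`, i.e. `M̂(x, y) = (−Aᵀy, Ax)`. -/
def Mhat {n m : ℕ} (A : Matrix (Fin m) (Fin n) ℝ)
    (u : (Fin n → ℝ) × (Fin m → ℝ)) : (Fin n → ℝ) × (Fin m → ℝ) :=
  (-(Aᵀ *ᵥ u.2), A *ᵥ u.1)

/-- The Euclidean inner product on `ℝⁿ × ℝᵐ`. -/
def pdot {n m : ℕ} (u₁ u₂ : (Fin n → ℝ) × (Fin m → ℝ)) : ℝ := u₁.1 ⬝ᵥ u₂.1 + u₁.2 ⬝ᵥ u₂.2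

/-- The N-PDHG1 iteration: `x^{k+1} ∈ X` minimizes
`x ↦ Φ(x, yᵏ) + (1/2)⟨x − xᵏ, (rAᵀA + Q)(x − xᵏ)⟩` over `X`, and `y^{k+1} ∈ Y` maximizes
`y ↦ Φ(2x^{k+1} − xᵏ, y) − (1/(2r))‖y − yᵏ‖²` over `Y`. -/
def NPDHG1 {n m : ℕ} (θ1 : (Fin n → ℝ) → ℝ) (θ2 : (Fin m → ℝ) → ℝ)
    (X : Set (Fin n → ℝ)) (Y : Set (Fin m → ℝ)) (A : Matrix (Fin m) (Fin n) ℝ)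
    (r : ℝ) (Q : Matrix (Fin n) (Fin n) ℝ)
    (x : ℕ → Fin n → ℝ) (y : ℕ → Fin m → ℝ) : Prop :=
  (∀ k : ℕ, x (k + 1) ∈ X ∧ ∀ z ∈ X,
      Phi θ1 θ2 A (x (k + 1)) (y k)
          + 1 / 2 * ((x (k + 1) - x k) ⬝ᵥ ((r • (Aᵀ * A) + Q) *ᵥ (x (k + 1) - x k)))
        ≤ Phi θ1 θ2 A z (y k)
          + 1 / 2 * ((z - x k) ⬝ᵥ ((r • (Aᵀ * A) + Q) *ᵥ (z - x k)))) ∧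
  (∀ k : ℕ, y (k + 1) ∈ Y ∧ ∀ z ∈ Y,
      Phi θ1 θ2 A ((2 : ℝ) • x (k + 1) - x k) z - 1 / (2 * r) * ((z - y k) ⬝ᵥ (z - y k))
        ≤ Phi θ1 θ2 A ((2 : ℝ) • x (k + 1) - x k) (y (k + 1))
          - 1 / (2 * r) * ((y (k + 1) - y k) ⬝ᵥ (y (k + 1) - y k)))

lemma npdhg_aux_t (c e : ℝ) (h : ∀ t : ℝ, 0 < t → t ≤ 1 → 0 ≤ c + t * e) : 0 ≤ c := by
  by_contra hc
  push_neg at hc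
  rcases le_or_gt e 0 with he | he
  · have := h 1 one_pos le_rfl; linarith
  · have h1 : 0 < -c / (2 * e) := div_pos (by linarith) (by linarith)
    have h2 := h (min 1 (-c / (2 * e))) (lt_min one_pos h1) (min_le_left _ _)
    have h3 : min 1 (-c / (2 * e)) * e ≤ (-c / (2 * e)) * e :=
      mul_le_mul_of_nonneg_right (min_le_right _ _) he.le
    have h4 : (-c / (2 * e)) * e = -c / 2 := by field_simp
    linarith

lemma npdhg_swapdot {n m : ℕ} (A : Matrix (Fin m) (Fin n) ℝ) (v : Fin m → ℝ) (w : Fin n → ℝ) :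
    v ⬝ᵥ (A *ᵥ w) = w ⬝ᵥ (Aᵀ *ᵥ v) := by
  rw [Matrix.dotProduct_mulVec, Matrix.mulVec_transpose, dotProduct_comm]

lemma npdhg_varineq {n : ℕ} {θ : (Fin n → ℝ) → ℝ} (hθ : ConvexOn ℝ Set.univ θ)
    {X : Set (Fin n → ℝ)} (hX : Convex ℝ X)
    (c x0 xs : Fin n → ℝ) (G : Matrix (Fin n) (Fin n) ℝ)
    (hsym : ∀ v w : Fin n → ℝ, v ⬝ᵥ (G *ᵥ w) = w ⬝ᵥ (G *ᵥ v))
    (hxs : xs ∈ X)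
    (hmin : ∀ z ∈ X, θ xs + c ⬝ᵥ xs + 1/2 * ((xs - x0) ⬝ᵥ (G *ᵥ (xs - x0)))
      ≤ θ z + c ⬝ᵥ z + 1/2 * ((z - x0) ⬝ᵥ (G *ᵥ (z - x0)))) :
    ∀ z ∈ X, 0 ≤ θ z - θ xs + (z - xs) ⬝ᵥ (c + G *ᵥ (xs - x0)) := by
  intro z hz
  set d := z - xs with hd
  set a := xs - x0 with ha
  have key : ∀ t : ℝ, 0 < t → t ≤ 1 →
      0 ≤ (θ z - θ xs + c ⬝ᵥ d + d ⬝ᵥ (G *ᵥ a)) + t * (1/2 * (d ⬝ᵥ (G *ᵥ d))) := by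
    intro t ht0 ht1
    have hw : xs + t • d ∈ X := by
      have : xs + t • d = (1 - t) • xs + t • z := by rw [hd]; module
      rw [this]
      exact hX hxs hz (by linarith) ht0.le (by ring)
    have hcv : θ (xs + t • d) ≤ (1 - t) * θ xs + t * θ z := by
      have : xs + t • d = (1 - t) • xs + t • z := by rw [hd]; module
      rw [this]
      exact hθ.2 (Set.mem_univ _) (Set.mem_univ _) (by linarith) ht0.le (by ring)
    have hm := hmin (xs + t • d) hw
    have e1 : xs + t • d - x0 = a + t • d := by rw [ha]; abel
    have e2 : c ⬝ᵥ (xs + t • d) = c ⬝ᵥ xs + t * (c ⬝ᵥ d) := by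
      simp [dotProduct_add, dotProduct_smul, smul_eq_mul]
    have e3 : (a + t • d) ⬝ᵥ (G *ᵥ (a + t • d))
        = a ⬝ᵥ (G *ᵥ a) + 2 * t * (d ⬝ᵥ (G *ᵥ a)) + t * t * (d ⬝ᵥ (G *ᵥ d)) := by
      rw [Matrix.mulVec_add, Matrix.mulVec_smul]
      simp only [dotProduct_add, add_dotProduct, dotProduct_smul, smul_dotProduct, smul_eq_mul]
      rw [hsym a d]; ring
    rw [e1, e3, e2] at hm
    have step : 0 ≤ t * ((θ z - θ xs + c ⬝ᵥ d + d ⬝ᵥ (G *ᵥ a))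
        + t * (1/2 * (d ⬝ᵥ (G *ᵥ d)))) := by nlinarith [hm, hcv]
    exact nonneg_of_mul_nonneg_right step ht0
  have h0 := npdhg_aux_t _ _ key
  have e4 : (z - xs) ⬝ᵥ (c + G *ᵥ a) = c ⬝ᵥ d + d ⬝ᵥ (G *ᵥ a) := by
    rw [← hd, dotProduct_add, dotProduct_comm d c]
  linarith [h0, e4]

/-- Lemma 4.1, inequality (26). -/
theorem stmt_17 (n m : ℕ) (θ1 : (Fin n → ℝ) → ℝ) (θ2 : (Fin m → ℝ) → ℝ)
    (hθ1 : ConvexOn ℝ Set.univ θ1) (hθ2 : ConvexOn ℝ Set.univ θ2)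
    (X : Set (Fin n → ℝ)) (hXne : X.Nonempty) (hXclosed : IsClosed X) (hXconvex : Convex ℝ X)
    (Y : Set (Fin m → ℝ)) (hYne : Y.Nonempty) (hYclosed : IsClosed Y) (hYconvex : Convex ℝ Y)
    (A : Matrix (Fin m) (Fin n) ℝ) (r : ℝ) (hr : 0 < r)
    (Q : Matrix (Fin n) (Fin n) ℝ) (hQ : Q.PosDef)
    (x : ℕ → Fin n → ℝ) (y : ℕ → Fin m → ℝ) (halg : NPDHG1 θ1 θ2 X Y A r Q x y) :
    ∀ k : ℕ, (x (k + 1) ∈ X ∧ y (k + 1) ∈ Y) ∧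
      ∀ u : (Fin n → ℝ) × (Fin m → ℝ), u.1 ∈ X → u.2 ∈ Y →
        (θ1 u.1 + θ2 u.2) - (θ1 (x (k + 1)) + θ2 (y (k + 1)))
            + pdot (u - (x (k + 1), y (k + 1))) (Mhat A u) ≥
          Hbil A Q r (u - (x (k + 1), y (k + 1))) ((x k, y k) - (x (k + 1), y (k + 1))) := by
  intro k
  obtain ⟨hp, hx2⟩ := halg.1 k
  obtain ⟨hq, hy2⟩ := halg.2 k
  refine ⟨⟨hp, hq⟩, ?_⟩
  intro u hu1 hu2
  set xk := x k with hxk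
  set yk := y k with hyk
  set p := x (k + 1) with hp'
  set q := y (k + 1) with hq'
  set G : Matrix (Fin n) (Fin n) ℝ := r • (Aᵀ * A) + Q with hG
  set G2 : Matrix (Fin m) (Fin m) ℝ := r⁻¹ • (1 : Matrix (Fin m) (Fin m) ℝ) with hG2
  set c1 : Fin n → ℝ := -(Aᵀ *ᵥ yk) with hc1
  set c2 : Fin m → ℝ := A *ᵥ ((2 : ℝ) • p - xk) with hc2
  have hQt : Qᵀ = Q := by
    ext i j
    have := congrFun (congrFun hQ.1 i) j
    simpa using this
  have hsymG : ∀ v w : Fin n → ℝ, v ⬝ᵥ (G *ᵥ w) = w ⬝ᵥ (G *ᵥ v) := by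
    intro v w
    rw [npdhg_swapdot]
    congr 1
    rw [hG, Matrix.transpose_add, Matrix.transpose_smul, Matrix.transpose_mul,
      Matrix.transpose_transpose, hQt]
  have hG2v : ∀ v : Fin m → ℝ, G2 *ᵥ v = r⁻¹ • v := by
    intro v
    rw [hG2, Matrix.smul_mulVec, Matrix.one_mulVec]
  have hsymG2 : ∀ v w : Fin m → ℝ, v ⬝ᵥ (G2 *ᵥ w) = w ⬝ᵥ (G2 *ᵥ v) := by
    intro v w
    rw [hG2v, hG2v, dotProduct_smul, dotProduct_smul, dotProduct_comm]
  have ec1 : ∀ w : Fin n → ℝ, c1 ⬝ᵥ w = -(yk ⬝ᵥ (A *ᵥ w)) := by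
    intro w
    rw [hc1, neg_dotProduct, dotProduct_comm, ← npdhg_swapdot]
  have hminx : ∀ z ∈ X, θ1 p + c1 ⬝ᵥ p + 1/2 * ((p - xk) ⬝ᵥ (G *ᵥ (p - xk)))
      ≤ θ1 z + c1 ⬝ᵥ z + 1/2 * ((z - xk) ⬝ᵥ (G *ᵥ (z - xk))) := by
    intro z hz
    have h := hx2 z hz
    simp only [Phi] at h
    have h1 := ec1 z
    have h2 := ec1 p
    rw [hG]
    linarith
  have hminy : ∀ z ∈ Y, θ2 q + c2 ⬝ᵥ q + 1/2 * ((q - yk) ⬝ᵥ (G2 *ᵥ (q - yk)))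
      ≤ θ2 z + c2 ⬝ᵥ z + 1/2 * ((z - yk) ⬝ᵥ (G2 *ᵥ (z - yk))) := by
    intro z hz
    have h := hy2 z hz
    simp only [Phi] at h
    have h1 : c2 ⬝ᵥ z = z ⬝ᵥ (A *ᵥ ((2 : ℝ) • p - xk)) := by rw [hc2, dotProduct_comm]
    have h2 : c2 ⬝ᵥ q = q ⬝ᵥ (A *ᵥ ((2 : ℝ) • p - xk)) := by rw [hc2, dotProduct_comm]
    have h3 : ∀ v : Fin m → ℝ, v ⬝ᵥ (G2 *ᵥ v) = r⁻¹ * (v ⬝ᵥ v) := by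
      intro v; rw [hG2v, dotProduct_smul, smul_eq_mul]
    have h4 := h3 (z - yk)
    have h5 := h3 (q - yk)
    have hrr : 1 / (2 * r) = 1/2 * r⁻¹ := by field_simp
    rw [hrr] at h
    linarith
  have J1 := npdhg_varineq hθ1 hXconvex c1 xk p G hsymG hp hminx u.1 hu1
  have J2 := npdhg_varineq hθ2 hYconvex c2 yk q G2 hsymG2 hq hminy u.2 hu2
  rw [ge_iff_le]
  have s1 : u.1 ⬝ᵥ (Aᵀ *ᵥ u.2) = u.2 ⬝ᵥ (A *ᵥ u.1) := (npdhg_swapdot A u.2 u.1).symm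
  have s2 : u.1 ⬝ᵥ (Aᵀ *ᵥ q) = q ⬝ᵥ (A *ᵥ u.1) := (npdhg_swapdot A q u.1).symm
  have s3 : u.1 ⬝ᵥ (Aᵀ *ᵥ yk) = yk ⬝ᵥ (A *ᵥ u.1) := (npdhg_swapdot A yk u.1).symm
  have s4 : p ⬝ᵥ (Aᵀ *ᵥ u.2) = u.2 ⬝ᵥ (A *ᵥ p) := (npdhg_swapdot A u.2 p).symm
  have s5 : p ⬝ᵥ (Aᵀ *ᵥ q) = q ⬝ᵥ (A *ᵥ p) := (npdhg_swapdot A q p).symm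
  have s6 : p ⬝ᵥ (Aᵀ *ᵥ yk) = yk ⬝ᵥ (A *ᵥ p) := (npdhg_swapdot A yk p).symm
  have key : ((θ1 u.1 + θ2 u.2) - (θ1 p + θ2 q)
        + ((u.1 - p) ⬝ᵥ (-(Aᵀ *ᵥ u.2)) + (u.2 - q) ⬝ᵥ (A *ᵥ u.1)))
      - ((u.1 - p) ⬝ᵥ (G *ᵥ (xk - p)) + (u.1 - p) ⬝ᵥ (Aᵀ *ᵥ (yk - q))
        + (u.2 - q) ⬝ᵥ (A *ᵥ (xk - p)) + 1 / r * ((u.2 - q) ⬝ᵥ (yk - q)))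
      = (θ1 u.1 - θ1 p + (u.1 - p) ⬝ᵥ (c1 + G *ᵥ (p - xk)))
        + (θ2 u.2 - θ2 q + (u.2 - q) ⬝ᵥ (c2 + G2 *ᵥ (q - yk))) := by
    rw [hc1, hc2]
    simp only [hG2v, Matrix.mulVec_sub, Matrix.mulVec_smul, dotProduct_add, dotProduct_sub,
      sub_dotProduct, dotProduct_neg, neg_dotProduct, dotProduct_smul, smul_dotProduct,
      smul_eq_mul, smul_sub]
    rw [s1, s2, s3, s4, s5, s6]
    field_simp
    ring
  simp only [pdot, Mhat, Hbil, Prod.fst_sub, Prod.snd_sub, ← hG]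
  linarith [key, J1, J2]
end
end

section
/- Suppose the sequence (x^k, y^k) is generated by N-PDHG1, i.e., x^{k+1} ∈ X minimizes x ↦ Φ(x, y^k) + (1/2)⟨x − x^k, (rAᵀA + Q)(x − x^k)⟩ over X, and y^{k+1} ∈ Y maximizes y ↦ Φ(2x^{k+1} − x^k, y) − (1/(2r))‖y − y^k‖² over Y. Let u* = (x*, y*) ∈ M satisfy θ(u) − θ(u*) + ⟨u − u*, M̂u*⟩ ≥ 0 for all u ∈ M (equivalently, (x*, y*) is a saddle point of Φ over X × Y). Then for every k: ‖u* − u^{k+1}‖²_H ≤ ‖u* − u^k‖²_H − ‖u^k − u^{k+1}‖²_H, where u^k = (x^k, y^k). -/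
open Matrix

noncomputable section

lemma crossA {n m : ℕ} (A : Matrix (Fin m) (Fin n) ℝ) (x : Fin n → ℝ) (y : Fin m → ℝ) :
    x ⬝ᵥ (Aᵀ *ᵥ y) = y ⬝ᵥ (A *ᵥ x) := by
  rw [Matrix.dotProduct_mulVec, Matrix.vecMul_transpose, dotProduct_comm]

lemma symB {n : ℕ} {B : Matrix (Fin n) (Fin n) ℝ} (hB : Bᵀ = B) (a b : Fin n → ℝ) :
    a ⬝ᵥ (B *ᵥ b) = b ⬝ᵥ (B *ᵥ a) := by
  rw [Matrix.dotProduct_mulVec]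
  conv_lhs => rw [← hB]
  rw [Matrix.vecMul_transpose, dotProduct_comm]

lemma key_limit (c d : ℝ) (h : ∀ t : ℝ, 0 < t → t ≤ 1 → 0 ≤ c + t * d) : 0 ≤ c := by
  by_contra hc
  push_neg at hc
  rcases le_or_gt d 0 with hd | hd
  · have := h 1 one_pos le_rfl; linarith
  · have hq : 0 < -c / (2 * d) := div_pos (by linarith) (by linarith)
    have ht0 : 0 < min 1 (-c / (2 * d)) := lt_min one_pos hq
    have h1 := h _ ht0 (min_le_left _ _)
    have hle : min 1 (-c / (2 * d)) ≤ -c / (2 * d) := min_le_right _ _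
    have h2 : min 1 (-c / (2 * d)) * d ≤ -c / (2 * d) * d :=
      mul_le_mul_of_nonneg_right hle hd.le
    have h3 : -c / (2 * d) * d = -c / 2 := by field_simp
    linarith

lemma prox_VI {n : ℕ} {φ : (Fin n → ℝ) → ℝ} (hφ : ConvexOn ℝ Set.univ φ)
    {X : Set (Fin n → ℝ)} (hX : Convex ℝ X)
    (B : Matrix (Fin n) (Fin n) ℝ) (hB : Bᵀ = B) (b p xp : Fin n → ℝ)
    (hxp : xp ∈ X)
    (hmin : ∀ z ∈ X, φ xp + b ⬝ᵥ xp + 1 / 2 * ((xp - p) ⬝ᵥ (B *ᵥ (xp - p)))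
      ≤ φ z + b ⬝ᵥ z + 1 / 2 * ((z - p) ⬝ᵥ (B *ᵥ (z - p)))) :
    ∀ z ∈ X, 0 ≤ φ z - φ xp + (z - xp) ⬝ᵥ (b + B *ᵥ (xp - p)) := by
  intro z hz
  set w := z - xp with hw
  set v := xp - p with hv
  have hgoal : (z - xp) ⬝ᵥ (b + B *ᵥ (xp - p)) = w ⬝ᵥ b + w ⬝ᵥ (B *ᵥ v) := by
    rw [dotProduct_add]
  rw [hgoal]
  apply key_limit _ (1 / 2 * (w ⬝ᵥ (B *ᵥ w)))
  intro t ht0 ht1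
  have hmem : (1 - t) • xp + t • z ∈ X := hX hxp hz (by linarith) ht0.le (by ring)
  have h1 := hmin _ hmem
  have h2 := hφ.2 (Set.mem_univ xp) (Set.mem_univ z) (by linarith : (0:ℝ) ≤ 1 - t) ht0.le
    (by ring)
  have e1 : (1 - t) • xp + t • z = xp + t • w := by
    funext i; simp [hw, smul_eq_mul]; ring
  rw [e1] at h1 h2
  rw [smul_eq_mul, smul_eq_mul] at h2
  have e2 : xp + t • w - p = v + t • w := by
    funext i; simp [hv]; ring
  rw [e2] at h1
  have e3 : b ⬝ᵥ (xp + t • w) = b ⬝ᵥ xp + t * (b ⬝ᵥ w) := by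
    simp [dotProduct_add, dotProduct_smul, smul_eq_mul]
  have e4 : (v + t • w) ⬝ᵥ (B *ᵥ (v + t • w))
      = v ⬝ᵥ (B *ᵥ v) + 2 * t * (w ⬝ᵥ (B *ᵥ v)) + t * t * (w ⬝ᵥ (B *ᵥ w)) := by
    have hs := symB hB v w
    simp [Matrix.mulVec_add, Matrix.mulVec_smul, add_dotProduct, dotProduct_add,
      smul_dotProduct, dotProduct_smul, smul_eq_mul]
    linear_combination t * hs
  rw [e3, e4] at h1
  have hbw : b ⬝ᵥ w = w ⬝ᵥ b := dotProduct_comm _ _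
  have h3 : 0 ≤ t * (φ z - φ xp + (w ⬝ᵥ b + w ⬝ᵥ (B *ᵥ v))
      + t * (1 / 2 * (w ⬝ᵥ (B *ᵥ w)))) := by nlinarith [h1, h2]
  exact nonneg_of_mul_nonneg_right h3 ht0

lemma Hsq_add {n m : ℕ} (A : Matrix (Fin m) (Fin n) ℝ) {Q : Matrix (Fin n) (Fin n) ℝ}
    (hQs : Qᵀ = Q) (r : ℝ) (a b : (Fin n → ℝ) × (Fin m → ℝ)) :
    HnormSq A Q r (a + b) = HnormSq A Q r a + 2 * Hbil A Q r a b + HnormSq A Q r b := by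
  have h1 := symB hQs b.1 a.1
  have h2 : (A *ᵥ b.1) ⬝ᵥ (A *ᵥ a.1) = (A *ᵥ a.1) ⬝ᵥ (A *ᵥ b.1) := dotProduct_comm _ _
  have h3 : b.2 ⬝ᵥ a.2 = a.2 ⬝ᵥ b.2 := dotProduct_comm _ _
  simp only [HnormSq, Hbil, Prod.fst_add, Prod.snd_add]
  simp only [Matrix.add_mulVec, Matrix.smul_mulVec, Matrix.mulVec_add,
    Matrix.mulVec_smul, ← Matrix.mulVec_mulVec, crossA, dotProduct_add, add_dotProduct,
    dotProduct_smul, smul_dotProduct, smul_eq_mul]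
  ring_nf
  linear_combination (-r) * h2 + h1 + (1/r) * h3
lemma Hsq_neg {n m : ℕ} (A : Matrix (Fin m) (Fin n) ℝ) (Q : Matrix (Fin n) (Fin n) ℝ)
    (r : ℝ) (b : (Fin n → ℝ) × (Fin m → ℝ)) :
    HnormSq A Q r (-b) = HnormSq A Q r b := by
  simp only [HnormSq, Hbil, Prod.fst_neg, Prod.snd_neg, Matrix.mulVec_neg,
    dotProduct_neg, neg_dotProduct, neg_neg]

lemma main_id {n m : ℕ} (A : Matrix (Fin m) (Fin n) ℝ) (Q : Matrix (Fin n) (Fin n) ℝ)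
    (r : ℝ) (p : (Fin n → ℝ) × (Fin m → ℝ)) (x1 x0 : Fin n → ℝ) (y1 y0 : Fin m → ℝ) :
    Hbil A Q r (p - (x1, y1)) ((x1, y1) - (x0, y0)) =
      (p.1 - x1) ⬝ᵥ (-(Aᵀ *ᵥ y0) + (r • (Aᵀ * A) + Q) *ᵥ (x1 - x0))
      + (p.2 - y1) ⬝ᵥ (A *ᵥ ((2 : ℝ) • x1 - x0) + (1 / r) • (y1 - y0))
      + ((x1 - p.1) ⬝ᵥ (-(Aᵀ *ᵥ p.2)) + (y1 - p.2) ⬝ᵥ (A *ᵥ p.1)) := by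
  simp only [Hbil, Prod.fst_sub, Prod.snd_sub]
  simp only [Matrix.add_mulVec, Matrix.smul_mulVec, Matrix.mulVec_add,
    Matrix.mulVec_sub, Matrix.mulVec_smul, Matrix.mulVec_neg, ← Matrix.mulVec_mulVec,
    crossA, dotProduct_add, add_dotProduct, dotProduct_sub, sub_dotProduct,
    dotProduct_smul, smul_dotProduct, dotProduct_neg, neg_dotProduct, smul_eq_mul]
  ring

/-- Contraction of N-PDHG1 with respect to the `H`-norm around any
saddle point `u* = (x*, y*)` of `Φ` over `X × Y`. -/
theorem stmt_18 (n m : ℕ) (θ1 : (Fin n → ℝ) → ℝ) (θ2 : (Fin m → ℝ) → ℝ)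
    (hθ1 : ConvexOn ℝ Set.univ θ1) (hθ2 : ConvexOn ℝ Set.univ θ2)
    (X : Set (Fin n → ℝ)) (hXne : X.Nonempty) (hXclosed : IsClosed X) (hXconvex : Convex ℝ X)
    (Y : Set (Fin m → ℝ)) (hYne : Y.Nonempty) (hYclosed : IsClosed Y) (hYconvex : Convex ℝ Y)
    (A : Matrix (Fin m) (Fin n) ℝ) (r : ℝ) (hr : 0 < r)
    (Q : Matrix (Fin n) (Fin n) ℝ) (hQ : Q.PosDef)
    (x : ℕ → Fin n → ℝ) (y : ℕ → Fin m → ℝ) (halg : NPDHG1 θ1 θ2 X Y A r Q x y)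
    (us : (Fin n → ℝ) × (Fin m → ℝ)) (husX : us.1 ∈ X) (husY : us.2 ∈ Y)
    (hstar : ∀ u : (Fin n → ℝ) × (Fin m → ℝ), u.1 ∈ X → u.2 ∈ Y →
      (θ1 u.1 + θ2 u.2) - (θ1 us.1 + θ2 us.2) + pdot (u - us) (Mhat A us) ≥ 0) :
    ∀ k : ℕ,
      HnormSq A Q r (us - (x (k + 1), y (k + 1))) ≤
        HnormSq A Q r (us - (x k, y k))
          - HnormSq A Q r ((x k, y k) - (x (k + 1), y (k + 1))) := by
  intro k
  obtain ⟨halgx, halgy⟩ := halg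
  obtain ⟨hx1, hxmin⟩ := halgx k
  obtain ⟨hy1, hymin⟩ := halgy k
  set x1 := x (k + 1) with hx1d
  set y1 := y (k + 1) with hy1d
  set x0 := x k with hx0d
  set y0 := y k with hy0d
  have hQs : Qᵀ = Q := hQ.1.eq
  have hGs : (r • (Aᵀ * A) + Q)ᵀ = r • (Aᵀ * A) + Q := by
    simp [Matrix.transpose_add, Matrix.transpose_smul, Matrix.transpose_mul,
      Matrix.transpose_transpose, hQs]
  have hBms : ((1 / r) • (1 : Matrix (Fin m) (Fin m) ℝ))ᵀ
      = (1 / r) • (1 : Matrix (Fin m) (Fin m) ℝ) := by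
    simp [Matrix.transpose_smul]
  have cb : ∀ v : Fin n → ℝ, (-(Aᵀ *ᵥ y0)) ⬝ᵥ v = -(y0 ⬝ᵥ (A *ᵥ v)) := by
    intro v
    rw [neg_dotProduct, dotProduct_comm, crossA]
  have hminx : ∀ z ∈ X, θ1 x1 + (-(Aᵀ *ᵥ y0)) ⬝ᵥ x1
      + 1 / 2 * ((x1 - x0) ⬝ᵥ ((r • (Aᵀ * A) + Q) *ᵥ (x1 - x0)))
      ≤ θ1 z + (-(Aᵀ *ᵥ y0)) ⬝ᵥ z
      + 1 / 2 * ((z - x0) ⬝ᵥ ((r • (Aᵀ * A) + Q) *ᵥ (z - x0))) := by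
    intro z hz
    have h := hxmin z hz
    simp only [Phi] at h
    rw [cb x1, cb z]
    linarith
  have hVIx := prox_VI hθ1 hXconvex _ hGs (-(Aᵀ *ᵥ y0)) x0 x1 hx1 hminx us.1 husX
  have cy : ∀ v : Fin m → ℝ,
      1 / 2 * (v ⬝ᵥ (((1 / r) • (1 : Matrix (Fin m) (Fin m) ℝ)) *ᵥ v))
        = 1 / (2 * r) * (v ⬝ᵥ v) := by
    intro v
    rw [Matrix.smul_mulVec, Matrix.one_mulVec, dotProduct_smul, smul_eq_mul]
    ring
  have hminy : ∀ z ∈ Y, θ2 y1 + (A *ᵥ ((2 : ℝ) • x1 - x0)) ⬝ᵥ y1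
      + 1 / 2 * ((y1 - y0) ⬝ᵥ (((1 / r) • (1 : Matrix (Fin m) (Fin m) ℝ)) *ᵥ (y1 - y0)))
      ≤ θ2 z + (A *ᵥ ((2 : ℝ) • x1 - x0)) ⬝ᵥ z
      + 1 / 2 * ((z - y0) ⬝ᵥ (((1 / r) • (1 : Matrix (Fin m) (Fin m) ℝ)) *ᵥ (z - y0))) := by
    intro z hz
    have h := hymin z hz
    simp only [Phi] at h
    rw [cy (y1 - y0), cy (z - y0),
      dotProduct_comm (A *ᵥ ((2 : ℝ) • x1 - x0)) y1,
      dotProduct_comm (A *ᵥ ((2 : ℝ) • x1 - x0)) z]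
    linarith
  have hVIy := prox_VI hθ2 hYconvex _ hBms (A *ᵥ ((2 : ℝ) • x1 - x0)) y0 y1 hy1 hminy
    us.2 husY
  have hBmv : ((1 / r) • (1 : Matrix (Fin m) (Fin m) ℝ)) *ᵥ (y1 - y0)
      = (1 / r) • (y1 - y0) := by
    rw [Matrix.smul_mulVec, Matrix.one_mulVec]
  rw [hBmv] at hVIy
  have h3 := hstar (x1, y1) hx1 hy1
  simp only [pdot, Mhat, Prod.fst_sub, Prod.snd_sub, ge_iff_le] at h3
  have hkey : 0 ≤ Hbil A Q r (us - (x1, y1)) ((x1, y1) - (x0, y0)) := by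
    rw [main_id]
    linarith [hVIx, hVIy, h3]
  have hsub : us - (x0, y0) = (us - (x1, y1)) + ((x1, y1) - (x0, y0)) :=
    (sub_add_sub_cancel us (x1, y1) (x0, y0)).symm
  have hneg : ((x0, y0) : (Fin n → ℝ) × (Fin m → ℝ)) - (x1, y1)
      = -((x1, y1) - (x0, y0)) := (neg_sub _ _).symm
  rw [hsub, hneg, Hsq_add A hQs, Hsq_neg]
  linarith [hkey]
end
end
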